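/- arXiv:0708.1073 — 2 statements merged into one kernel-verified Lean document; each statement's English description precedes it below -/
import Mathlib

section
/- Let F : ℝ → ℝ be three times continuously differentiable with bounded first, second and third derivatives, let σ₀, A ∈ ℝ, let γ ≥ 0, and let μ be the standard Gaussian measure N(0,1) on ℝ. Then, as ε → 0 from the right, ∫ F(σ₀ + ε·A + √(ε·γ)·y) dμ(y) − F(σ₀) − ε·(F′(σ₀)·A + (1/2)·F″(σ₀)·γ) = o(ε); that is, the bias of F(σ) for the perturbed parameter σ = σ₀ + εA + √(εγ)·Y with Y standard Gaussian equals ε·(F′(σ₀)A + ½F″(σ₀)γ) up to o(ε). -/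
open MeasureTheory ProbabilityTheory Filter Asymptotics
open Real
open scoped ENNReal NNReal

lemma pdf01 (x : ℝ) : gaussianPDFReal 0 1 x
    = (Real.sqrt (2 * π))⁻¹ * Real.exp (-(1/2) * x ^ 2) := by
  simp [gaussianPDFReal]
  ring_nf
  exact Or.inl trivial

lemma gauss_integral_eq (g : ℝ → ℝ) :
    ∫ y, g y ∂(gaussianReal 0 1) = ∫ y, g y * gaussianPDFReal 0 1 y := by
  rw [gaussianReal_of_var_ne_zero 0 one_ne_zero, gaussianPDF_def]
  have h : (fun x => ENNReal.ofReal (gaussianPDFReal 0 1 x))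
      = fun x => ((gaussianPDFReal 0 1 x).toNNReal : ℝ≥0∞) := rfl
  rw [h, integral_withDensity_eq_integral_smul
    ((measurable_gaussianPDFReal 0 1).real_toNNReal) g]
  congr 1; funext x
  rw [NNReal.smul_def, smul_eq_mul, Real.coe_toNNReal _ (gaussianPDFReal_nonneg 0 1 x), mul_comm]

lemma gauss_integrable_iff (g : ℝ → ℝ) :
    Integrable g (gaussianReal 0 1) ↔ Integrable (fun x => g x * gaussianPDFReal 0 1 x) := by
  rw [gaussianReal_of_var_ne_zero 0 one_ne_zero, gaussianPDF_def,
    integrable_withDensity_iff ((measurable_gaussianPDFReal 0 1).ennreal_ofReal)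
      (Eventually.of_forall fun x => ENNReal.ofReal_lt_top)]
  simp_rw [ENNReal.toReal_ofReal (gaussianPDFReal_nonneg 0 1 _)]

lemma int_e : Integrable (fun x : ℝ => Real.exp (-(1/2) * x ^ 2)) :=
  integrable_exp_neg_mul_sq (by norm_num)

lemma int_xe : Integrable (fun x : ℝ => x * Real.exp (-(1/2) * x ^ 2)) :=
  integrable_mul_exp_neg_mul_sq (by norm_num)

lemma int_x2e : Integrable (fun x : ℝ => x ^ 2 * Real.exp (-(1/2) * x ^ 2)) := by
  have h := integrable_rpow_mul_exp_neg_mul_sq (b := 1/2) (by norm_num) (s := 2) (by norm_num)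
  have : (fun x : ℝ => x ^ (2:ℝ) * Real.exp (-(1/2) * x ^ 2))
      = fun x : ℝ => x ^ 2 * Real.exp (-(1/2) * x ^ 2) := by
    funext x
    rw [show (2:ℝ) = ((2:ℕ):ℝ) by norm_num, Real.rpow_natCast]
  rwa [this] at h

lemma int_x3e : Integrable (fun x : ℝ => |x| ^ 3 * Real.exp (-(1/2) * x ^ 2)) := by
  have h := integrable_rpow_mul_exp_neg_mul_sq (b := 1/2) (by norm_num) (s := 3) (by norm_num)
  have h2 : (fun x : ℝ => x ^ (3:ℝ) * Real.exp (-(1/2) * x ^ 2))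
      = fun x : ℝ => x ^ 3 * Real.exp (-(1/2) * x ^ 2) := by
    funext x
    rw [show (3:ℝ) = ((3:ℕ):ℝ) by norm_num, Real.rpow_natCast]
  rw [h2] at h
  have := h.abs
  refine this.congr (Eventually.of_forall fun x => ?_)
  simp [abs_mul, abs_pow, abs_of_nonneg (Real.exp_nonneg _)]

lemma val_xe : ∫ x : ℝ, x * Real.exp (-(1/2) * x ^ 2) = 0 := by
  have hderiv : ∀ x : ℝ, HasDerivAt (fun x : ℝ => -Real.exp (-(1/2) * x ^ 2))
      (x * Real.exp (-(1/2) * x ^ 2)) x := by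
    intro x
    have h1 : HasDerivAt (fun x : ℝ => -(1/2) * x ^ 2) (-(1/2) * ((2:ℕ) * x ^ 1)) x :=
      (hasDerivAt_pow 2 x).const_mul (-(1/2))
    have h2 := (h1.exp).neg
    refine h2.congr_deriv ?_
    push_cast
    ring
  exact integral_eq_zero_of_hasDerivAt_of_integrable hderiv int_xe int_e.neg

lemma val_x2e : ∫ x : ℝ, x ^ 2 * Real.exp (-(1/2) * x ^ 2)
    = ∫ x : ℝ, Real.exp (-(1/2) * x ^ 2) := by
  have hderiv : ∀ x : ℝ, HasDerivAt (fun x : ℝ => -(x * Real.exp (-(1/2) * x ^ 2)))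
      (x ^ 2 * Real.exp (-(1/2) * x ^ 2) - Real.exp (-(1/2) * x ^ 2)) x := by
    intro x
    have h1 : HasDerivAt (fun x : ℝ => -(1/2) * x ^ 2) (-(1/2) * ((2:ℕ) * x ^ 1)) x :=
      (hasDerivAt_pow 2 x).const_mul (-(1/2))
    have h2 := ((hasDerivAt_id x).mul h1.exp).neg
    refine h2.congr_deriv ?_
    simp only [id_eq, pow_one]
    push_cast
    ring
  have h0 := integral_eq_zero_of_hasDerivAt_of_integrable hderiv (int_x2e.sub int_e) int_xe.neg
  have := integral_sub int_x2e int_e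
  rw [this] at h0
  linarith

lemma gauss_integrable_of (g : ℝ → ℝ)
    (h : Integrable (fun x => g x * Real.exp (-(1/2) * x ^ 2))) :
    Integrable g (gaussianReal 0 1) := by
  rw [gauss_integrable_iff]
  have h2 := h.const_mul ((Real.sqrt (2 * π))⁻¹)
  refine h2.congr (Eventually.of_forall fun x => ?_)
  dsimp only
  rw [pdf01]; ring

lemma gauss_integral_eq' (g : ℝ → ℝ) :
    ∫ y, g y ∂(gaussianReal 0 1)
      = (Real.sqrt (2 * π))⁻¹ * ∫ x, g x * Real.exp (-(1/2) * x ^ 2) := by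
  rw [gauss_integral_eq, ← integral_const_mul]
  congr 1; funext x; rw [pdf01]; ring

lemma c_int_e : (Real.sqrt (2 * π))⁻¹ * ∫ x : ℝ, Real.exp (-(1/2) * x ^ 2) = 1 := by
  calc (Real.sqrt (2 * π))⁻¹ * ∫ x : ℝ, Real.exp (-(1/2) * x ^ 2)
      = ∫ x : ℝ, gaussianPDFReal 0 1 x := by
        rw [← integral_const_mul]; congr 1; funext x; rw [pdf01]
    _ = 1 := integral_gaussianPDFReal_eq_one 0 one_ne_zero

lemma Mint_id : Integrable (fun y : ℝ => y) (gaussianReal 0 1) :=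
  gauss_integrable_of _ int_xe

lemma Mval_id : ∫ y, y ∂(gaussianReal 0 1) = 0 := by
  rw [gauss_integral_eq' (fun y => y), val_xe, mul_zero]

lemma Mint_sq : Integrable (fun y : ℝ => y ^ 2) (gaussianReal 0 1) :=
  gauss_integrable_of _ int_x2e

lemma Mval_sq : ∫ y, y ^ 2 ∂(gaussianReal 0 1) = 1 := by
  rw [gauss_integral_eq' (fun y => y ^ 2), val_x2e, c_int_e]

lemma Mint_cube : Integrable (fun y : ℝ => |y| ^ 3) (gaussianReal 0 1) :=
  gauss_integrable_of _ int_x3e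

lemma Mint_abs : Integrable (fun y : ℝ => |y|) (gaussianReal 0 1) := Mint_id.abs

lemma mem_uIcc_abs {x t : ℝ} (ht : t ∈ Set.uIcc 0 x) : |t| ≤ |x| := by
  rw [Set.mem_uIcc] at ht
  have h1 := le_abs_self x
  have h2 := neg_abs_le x
  rw [abs_le]
  rcases ht with ⟨ha, hb⟩ | ⟨ha, hb⟩ <;> constructor <;> linarith

lemma taylor_bound (F : ℝ → ℝ) (hF : ContDiff ℝ 3 F) {C3 : ℝ}
    (hC3 : ∀ x, |deriv (deriv (deriv F)) x| ≤ C3) (σ₀ : ℝ) (x : ℝ) :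
    |F (σ₀ + x) - F σ₀ - deriv F σ₀ * x - (1/2) * deriv (deriv F) σ₀ * x ^ 2|
      ≤ C3 * |x| ^ 3 := by
  have h21 : ContDiff ℝ (2 + 1 : ℕ) F := by exact_mod_cast hF
  have hd1 : Differentiable ℝ F := hF.differentiable (by norm_num)
  have hF' : ContDiff ℝ 2 (deriv F) := (contDiff_succ_iff_deriv.mp h21).2.2
  have hd2 : Differentiable ℝ (deriv F) := hF'.differentiable (by norm_num)
  have h11 : ContDiff ℝ (1 + 1 : ℕ) (deriv F) := by exact_mod_cast hF'
  have hF'' : ContDiff ℝ 1 (deriv (deriv F)) := (contDiff_succ_iff_deriv.mp h11).2.2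
  have hd3 : Differentiable ℝ (deriv (deriv F)) := hF''.differentiable (by norm_num)
  set c₁ := deriv F σ₀ with hc₁
  set c₂ := deriv (deriv F) σ₀ with hc₂
  -- Lipschitz bound on second derivative
  have hLip : ∀ u v : ℝ, |deriv (deriv F) u - deriv (deriv F) v| ≤ C3 * |u - v| := by
    intro u v
    have := Convex.norm_image_sub_le_of_norm_deriv_le (s := Set.univ)
      (fun y _ => (hd3 y)) (fun y _ => by simpa [Real.norm_eq_abs] using hC3 y)
      convex_univ (Set.mem_univ v) (Set.mem_univ u)
    simpa [Real.norm_eq_abs] using this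
  -- derivative of the inner function
  have hA : ∀ t : ℝ, HasDerivAt (fun t => F (σ₀ + t)) (deriv F (σ₀ + t)) t := by
    intro t
    have := ((hd1 (σ₀ + t)).hasDerivAt).comp t ((hasDerivAt_id t).const_add σ₀)
    simpa [Function.comp_def] using this
  have hA' : ∀ t : ℝ, HasDerivAt (fun t => deriv F (σ₀ + t)) (deriv (deriv F) (σ₀ + t)) t := by
    intro t
    have := ((hd2 (σ₀ + t)).hasDerivAt).comp t ((hasDerivAt_id t).const_add σ₀)
    simpa [Function.comp_def] using this
  -- first-order remainder g1
  have hg1 : ∀ t : ℝ, HasDerivAt (fun t => deriv F (σ₀ + t) - c₁ - c₂ * t)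
      (deriv (deriv F) (σ₀ + t) - c₂) t := by
    intro t
    have h := ((hA' t).sub_const c₁).sub ((hasDerivAt_id t).const_mul c₂)
    refine h.congr_deriv ?_
    simp
  have hg : ∀ t : ℝ, HasDerivAt
      (fun t => F (σ₀ + t) - F σ₀ - c₁ * t - (1/2) * c₂ * t ^ 2)
      (deriv F (σ₀ + t) - c₁ - c₂ * t) t := by
    intro t
    have hq : HasDerivAt (fun t : ℝ => (1/2) * c₂ * t ^ 2) ((1/2) * c₂ * ((2:ℕ) * t ^ 1)) t :=
      (hasDerivAt_pow 2 t).const_mul _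
    have h := (((hA t).sub_const (F σ₀)).sub ((hasDerivAt_id t).const_mul c₁)).sub hq
    refine h.congr_deriv ?_
    push_cast
    simp
    ring
  have hC30 : 0 ≤ C3 := le_trans (abs_nonneg _) (hC3 0)
  -- bound on g1
  have hb1 : ∀ t : ℝ, |deriv F (σ₀ + t) - c₁ - c₂ * t| ≤ C3 * |t| * |t| := by
    intro t
    have h := Convex.norm_image_sub_le_of_norm_deriv_le (s := Set.uIcc 0 t)
      (f := fun t => deriv F (σ₀ + t) - c₁ - c₂ * t) (C := C3 * |t|)
      (fun y _ => (hg1 y).differentiableAt)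
      (fun y hy => by
        rw [(hg1 y).deriv, Real.norm_eq_abs]
        calc |deriv (deriv F) (σ₀ + y) - c₂| ≤ C3 * |y| := by
              simpa using hLip (σ₀ + y) σ₀
          _ ≤ C3 * |t| := by
              exact mul_le_mul_of_nonneg_left (mem_uIcc_abs hy) hC30)
      (convex_uIcc 0 t) Set.left_mem_uIcc Set.right_mem_uIcc
    simpa [Real.norm_eq_abs, ← hc₁] using h
  -- bound on g
  have hb : |F (σ₀ + x) - F σ₀ - c₁ * x - (1/2) * c₂ * x ^ 2| ≤ C3 * |x| * |x| * |x| := by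
    have h := Convex.norm_image_sub_le_of_norm_deriv_le (s := Set.uIcc 0 x)
      (f := fun t => F (σ₀ + t) - F σ₀ - c₁ * t - (1/2) * c₂ * t ^ 2)
      (C := C3 * |x| * |x|)
      (fun y _ => (hg y).differentiableAt)
      (fun y hy => by
        rw [(hg y).deriv, Real.norm_eq_abs]
        calc |deriv F (σ₀ + y) - c₁ - c₂ * y| ≤ C3 * |y| * |y| := hb1 y
          _ ≤ C3 * |x| * |x| := by
              have h1 := mem_uIcc_abs hy
              have h2 : (0:ℝ) ≤ |y| := abs_nonneg y
              have h3 : |y| * |y| ≤ |x| * |x| := mul_le_mul h1 h1 h2 (abs_nonneg x)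
              rw [mul_assoc, mul_assoc]
              exact mul_le_mul_of_nonneg_left h3 hC30)
      (convex_uIcc 0 x) Set.left_mem_uIcc Set.right_mem_uIcc
    simpa [Real.norm_eq_abs] using h
  calc |F (σ₀ + x) - F σ₀ - c₁ * x - (1/2) * c₂ * x ^ 2|
      ≤ C3 * |x| * |x| * |x| := hb
    _ = C3 * |x| ^ 3 := by ring

lemma integrable_F_affine (F : ℝ → ℝ) (hF : ContDiff ℝ 3 F) {C1 : ℝ}
    (hC1 : ∀ x, |deriv F x| ≤ C1) (c b : ℝ) :
    Integrable (fun y => F (c + b * y)) (gaussianReal 0 1) := by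
  have hd1 : Differentiable ℝ F := hF.differentiable (by norm_num)
  have hLip : ∀ u v : ℝ, |F u - F v| ≤ C1 * |u - v| := by
    intro u v
    have := Convex.norm_image_sub_le_of_norm_deriv_le (s := Set.univ)
      (fun y _ => (hd1 y)) (fun y _ => by simpa [Real.norm_eq_abs] using hC1 y)
      convex_univ (Set.mem_univ v) (Set.mem_univ u)
    simpa [Real.norm_eq_abs] using this
  have hmeas : AEStronglyMeasurable (fun y => F (c + b * y)) (gaussianReal 0 1) :=
    (hF.continuous.comp (by continuity)).aestronglyMeasurable
  have hint : Integrable (fun y : ℝ => |F c| + C1 * |b| * |y|) (gaussianReal 0 1) :=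
    (integrable_const _).add ((Mint_abs.const_mul (C1 * |b|)))
  refine hint.mono' hmeas (Eventually.of_forall fun y => ?_)
  rw [Real.norm_eq_abs]
  calc |F (c + b * y)| ≤ |F c| + |F (c + b * y) - F c| := by
        rw [abs_sub_comm]
        have := abs_sub_abs_le_abs_sub (F (c + b * y)) (F c)
        have h2 := abs_sub_comm (F (c + b * y)) (F c)
        nlinarith [abs_nonneg (F (c + b*y) - F c), le_abs_self (F (c + b * y)), abs_nonneg (F c), neg_abs_le (F (c+b*y))]
    _ ≤ |F c| + C1 * |b| * |y| := by
        have h := hLip (c + b * y) c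
        simp only [add_sub_cancel_left, abs_mul] at h
        linarith

lemma integral_expansion (F : ℝ → ℝ) (hF : ContDiff ℝ 3 F) {C1 : ℝ}
    (hC1 : ∀ x, |deriv F x| ≤ C1) (σ₀ a b : ℝ) :
    ∫ y, F (σ₀ + a + b * y) ∂(gaussianReal 0 1)
      = F σ₀ + deriv F σ₀ * a + (1/2) * deriv (deriv F) σ₀ * (a ^ 2 + b ^ 2)
        + ∫ y, (F (σ₀ + a + b * y) - F σ₀ - deriv F σ₀ * (a + b * y)
            - (1/2) * deriv (deriv F) σ₀ * (a + b * y) ^ 2) ∂(gaussianReal 0 1) := by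
  set μ := gaussianReal 0 1
  set c₁ := deriv F σ₀
  set c₂ := deriv (deriv F) σ₀
  set p := F σ₀ + c₁ * a + (1/2) * c₂ * a ^ 2
  set q := c₁ * b + c₂ * a * b
  set r := (1/2) * c₂ * b ^ 2
  have hIF : Integrable (fun y => F (σ₀ + a + b * y)) μ :=
    integrable_F_affine F hF hC1 (σ₀ + a) b
  have hIg : Integrable (fun y : ℝ => p + q * y + r * y ^ 2) μ :=
    ((integrable_const p).add (Mint_id.const_mul q)).add (Mint_sq.const_mul r)
  have hIgval : ∫ y : ℝ, (p + q * y + r * y ^ 2) ∂μ = p + r := by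
    have h1 : Integrable (fun y : ℝ => p + q * y) μ :=
      (integrable_const p).add (Mint_id.const_mul q)
    have h2 : Integrable (fun y : ℝ => r * y ^ 2) μ := Mint_sq.const_mul r
    have e1 : ∫ y : ℝ, (p + q * y + r * y ^ 2) ∂μ
        = (∫ y : ℝ, (p + q * y) ∂μ) + ∫ y : ℝ, r * y ^ 2 ∂μ := integral_add h1 h2
    have e2 : ∫ y : ℝ, (p + q * y) ∂μ
        = (∫ _ : ℝ, p ∂μ) + ∫ y : ℝ, q * y ∂μ :=
      integral_add (integrable_const p) (Mint_id.const_mul q)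
    have e3 : ∫ y : ℝ, q * y ∂μ = q * ∫ y : ℝ, y ∂μ := integral_const_mul q _
    have e4 : ∫ y : ℝ, r * y ^ 2 ∂μ = r * ∫ y : ℝ, y ^ 2 ∂μ := integral_const_mul r _
    have e5 : ∫ _ : ℝ, p ∂μ = p := by simp [μ]
    rw [e1, e2, e3, e4, e5, Mval_id, Mval_sq]
    ring
  have hfun : (fun y : ℝ => F (σ₀ + a + b * y) - F σ₀ - c₁ * (a + b * y)
      - (1/2) * c₂ * (a + b * y) ^ 2)
      = fun y : ℝ => F (σ₀ + a + b * y) - (p + q * y + r * y ^ 2) := by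
    funext y; simp only [p, q, r]; ring
  rw [hfun, integral_sub hIF hIg, hIgval]
  simp only [p, r]
  ring

lemma cube_add_le {u v : ℝ} (hu : 0 ≤ u) (hv : 0 ≤ v) :
    (u + v) ^ 3 ≤ 4 * (u ^ 3 + v ^ 3) := by
  nlinarith [sq_nonneg (u - v), mul_nonneg hu hv, mul_nonneg (mul_nonneg hu hu) hv,
    mul_nonneg (mul_nonneg hv hv) hu]

/-- Bias of `F(σ)` for the perturbed parameter `σ = σ₀ + εA + √(εγ)·Y`,
`Y` standard Gaussian, equals `ε·(F′(σ₀)A + ½F″(σ₀)γ)` up to `o(ε)` as `ε → 0⁺`. -/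
theorem bias_of_perturbed_parameter
    (F : ℝ → ℝ) (hF : ContDiff ℝ 3 F)
    (hF1 : ∃ C, ∀ x, |deriv F x| ≤ C)
    (hF2 : ∃ C, ∀ x, |deriv (deriv F) x| ≤ C)
    (hF3 : ∃ C, ∀ x, |deriv (deriv (deriv F)) x| ≤ C)
    (σ₀ A γ : ℝ) (hγ : 0 ≤ γ) :
    (fun ε : ℝ =>
        (∫ y, F (σ₀ + ε * A + Real.sqrt (ε * γ) * y) ∂(gaussianReal 0 1))
          - F σ₀ - ε * (deriv F σ₀ * A + (1 / 2) * deriv (deriv F) σ₀ * γ))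
      =o[nhdsWithin 0 (Set.Ioi 0)] (fun ε : ℝ => ε) := by

  obtain ⟨C1, hC1⟩ := hF1
  obtain ⟨C3, hC3⟩ := hF3
  have hC30 : 0 ≤ C3 := le_trans (abs_nonneg _) (hC3 0)
  set l := nhdsWithin (0:ℝ) (Set.Ioi 0) with hl
  set μ := gaussianReal 0 1 with hμ
  set c₁ := deriv F σ₀ with hc₁
  set c₂ := deriv (deriv F) σ₀ with hc₂
  set M₃ := ∫ y : ℝ, |y| ^ 3 ∂μ with hM₃
  have hM₃0 : 0 ≤ M₃ := integral_nonneg fun y => by positivity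
  set R : ℝ → ℝ → ℝ := fun ε y => F (σ₀ + ε * A + Real.sqrt (ε * γ) * y) - F σ₀
      - c₁ * (ε * A + Real.sqrt (ε * γ) * y)
      - (1/2) * c₂ * (ε * A + Real.sqrt (ε * γ) * y) ^ 2 with hRdef
  set φ : ℝ → ℝ := fun ε => (∫ y, R ε y ∂μ) + ((1/2) * c₂ * A ^ 2) * ε ^ 2 with hφdef
  -- eventual equality with φ
  have heq : (fun ε : ℝ =>
        (∫ y, F (σ₀ + ε * A + Real.sqrt (ε * γ) * y) ∂μ)
          - F σ₀ - ε * (c₁ * A + (1 / 2) * c₂ * γ)) =ᶠ[l] φ := by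
    filter_upwards [self_mem_nhdsWithin] with ε hε
    have hε0 : (0:ℝ) < ε := hε
    have hb2 : Real.sqrt (ε * γ) ^ 2 = ε * γ := Real.sq_sqrt (mul_nonneg hε0.le hγ)
    have hexp := integral_expansion F hF hC1 σ₀ (ε * A) (Real.sqrt (ε * γ))
    rw [← hμ, ← hc₂, ← hc₁] at hexp
    simp only [hφdef, hRdef]
    rw [hexp, hb2]
    ring
  refine heq.trans_isLittleO ?_
  -- the ε² part
  have hid : (fun ε : ℝ => ε) =o[l] (fun _ : ℝ => (1:ℝ)) :=
    (isLittleO_one_iff ℝ).mpr ((continuous_id.tendsto 0).mono_left nhdsWithin_le_nhds)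
  have hφ2 : (fun ε : ℝ => ((1/2) * c₂ * A ^ 2) * ε ^ 2) =o[l] (fun ε => ε) := by
    have h2 := (isBigO_refl (fun ε : ℝ => ε) l).mul_isLittleO hid
    have h3 : (fun ε : ℝ => ε ^ 2) =o[l] (fun ε => ε) := by simpa [sq] using h2
    exact h3.const_mul_left _
  -- ε √ε is o(ε)
  have hsq : (fun ε : ℝ => ε * Real.sqrt ε) =o[l] (fun ε => ε) := by
    have h1 : (fun ε : ℝ => Real.sqrt ε) =o[l] (fun _ => (1:ℝ)) := by
      refine (isLittleO_one_iff ℝ).mpr ?_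
      have := (Real.continuous_sqrt.tendsto 0).mono_left
        (nhdsWithin_le_nhds : nhdsWithin (0:ℝ) (Set.Ioi 0) ≤ nhds 0)
      simpa using this
    have h2 := (isBigO_refl (fun ε : ℝ => ε) l).mul_isLittleO h1
    simpa using h2
  -- big-O bound on the remainder integral
  have hφ1 : (fun ε : ℝ => ∫ y, R ε y ∂μ) =O[l] (fun ε : ℝ => ε * Real.sqrt ε) := by
    rw [isBigO_iff]
    refine ⟨4 * C3 * |A| ^ 3 + 4 * C3 * (Real.sqrt γ) ^ 3 * M₃, ?_⟩
    filter_upwards [Ioc_mem_nhdsGT one_pos] with ε hε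
    obtain ⟨hε0, hε1⟩ := hε
    have hεγ : (0:ℝ) ≤ ε * γ := mul_nonneg hε0.le hγ
    have hbound : ∀ y : ℝ, ‖R ε y‖
        ≤ 4 * C3 * |ε * A| ^ 3 + (4 * C3 * (Real.sqrt (ε * γ)) ^ 3) * |y| ^ 3 := by
      intro y
      have ht := taylor_bound F hF hC3 σ₀ (ε * A + Real.sqrt (ε * γ) * y)
      rw [← add_assoc, ← hc₂, ← hc₁] at ht
      simp only [hRdef]
      rw [Real.norm_eq_abs]
      refine le_trans ht ?_
      have h1 : |ε * A + Real.sqrt (ε * γ) * y| ≤ |ε * A| + Real.sqrt (ε * γ) * |y| := by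
        refine (abs_add_le _ _).trans ?_
        rw [abs_mul (Real.sqrt (ε * γ)) y, abs_of_nonneg (Real.sqrt_nonneg _)]
      calc C3 * |ε * A + Real.sqrt (ε * γ) * y| ^ 3
          ≤ C3 * (|ε * A| + Real.sqrt (ε * γ) * |y|) ^ 3 :=
            mul_le_mul_of_nonneg_left (pow_le_pow_left₀ (abs_nonneg _) h1 3) hC30
        _ ≤ C3 * (4 * (|ε * A| ^ 3 + (Real.sqrt (ε * γ) * |y|) ^ 3)) :=
            mul_le_mul_of_nonneg_left (cube_add_le (abs_nonneg _) (by positivity)) hC30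
        _ = 4 * C3 * |ε * A| ^ 3 + (4 * C3 * (Real.sqrt (ε * γ)) ^ 3) * |y| ^ 3 := by
            rw [mul_pow]; ring
    have hint : Integrable
        (fun y : ℝ => 4 * C3 * |ε * A| ^ 3 + (4 * C3 * (Real.sqrt (ε * γ)) ^ 3) * |y| ^ 3) μ :=
      (integrable_const _).add (Mint_cube.const_mul _)
    have h2 := norm_integral_le_of_norm_le hint (Eventually.of_forall hbound)
    have hval : ∫ y : ℝ, (4 * C3 * |ε * A| ^ 3
          + (4 * C3 * (Real.sqrt (ε * γ)) ^ 3) * |y| ^ 3) ∂μ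
        = 4 * C3 * |ε * A| ^ 3 + (4 * C3 * (Real.sqrt (ε * γ)) ^ 3) * M₃ := by
      have e1 : ∫ y : ℝ, (4 * C3 * |ε * A| ^ 3
            + (4 * C3 * (Real.sqrt (ε * γ)) ^ 3) * |y| ^ 3) ∂μ
          = (∫ _ : ℝ, (4 * C3 * |ε * A| ^ 3) ∂μ)
            + ∫ y : ℝ, (4 * C3 * (Real.sqrt (ε * γ)) ^ 3) * |y| ^ 3 ∂μ :=
        integral_add (integrable_const _) (Mint_cube.const_mul _)
      have e2 : ∫ y : ℝ, (4 * C3 * (Real.sqrt (ε * γ)) ^ 3) * |y| ^ 3 ∂μ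
          = (4 * C3 * (Real.sqrt (ε * γ)) ^ 3) * M₃ := integral_const_mul _ _
      have e3 : ∫ _ : ℝ, (4 * C3 * |ε * A| ^ 3) ∂μ = 4 * C3 * |ε * A| ^ 3 := by simp [hμ]
      rw [e1, e2, e3]
    rw [hval] at h2
    -- now compare with the target bound
    have hs : Real.sqrt ε ^ 2 = ε := Real.sq_sqrt hε0.le
    have hs0 : 0 ≤ Real.sqrt ε := Real.sqrt_nonneg ε
    have hs1 : Real.sqrt ε ≤ 1 := by
      rw [show (1:ℝ) = Real.sqrt 1 by rw [Real.sqrt_one]]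
      exact Real.sqrt_le_sqrt hε1
    have e2 : Real.sqrt ε ^ 3 = ε * Real.sqrt ε := by
      rw [show (3:ℕ) = 2 + 1 from rfl, pow_succ, hs]
    have hcube1 : ε ^ 3 ≤ ε * Real.sqrt ε := by
      have h6 : Real.sqrt ε ^ 6 ≤ Real.sqrt ε ^ 3 := pow_le_pow_of_le_one hs0 hs1 (by norm_num)
      have e1 : ε ^ 3 = Real.sqrt ε ^ 6 := by
        rw [show (6:ℕ) = 2 * 3 from rfl, pow_mul, hs]
      rw [e1, e2] at *
      linarith [h6]
    have hsplit : (Real.sqrt (ε * γ)) ^ 3 = (ε * Real.sqrt ε) * (Real.sqrt γ) ^ 3 := by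
      rw [Real.sqrt_mul hε0.le γ, mul_pow, e2]
    have habsA : |ε * A| ^ 3 = ε ^ 3 * |A| ^ 3 := by
      rw [abs_mul, abs_of_pos hε0, mul_pow]
    have hnorm : ‖ε * Real.sqrt ε‖ = ε * Real.sqrt ε := by
      rw [Real.norm_eq_abs, abs_of_nonneg (by positivity)]
    rw [hnorm]
    have hfinal : 4 * C3 * |ε * A| ^ 3 + (4 * C3 * (Real.sqrt (ε * γ)) ^ 3) * M₃
        ≤ (4 * C3 * |A| ^ 3 + 4 * C3 * (Real.sqrt γ) ^ 3 * M₃) * (ε * Real.sqrt ε) := by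
      rw [habsA, hsplit]
      have h1 : 4 * C3 * (ε ^ 3 * |A| ^ 3) ≤ 4 * C3 * |A| ^ 3 * (ε * Real.sqrt ε) := by
        have := mul_le_mul_of_nonneg_left hcube1 (by positivity : (0:ℝ) ≤ 4 * C3 * |A| ^ 3)
        nlinarith [this]
      nlinarith [h1]
    exact h2.trans hfinal
  exact (hφ1.trans_isLittleO hsq).add hφ2
end

section
/- (Refinement property of diffusionlets, heat case.) Let c > 0, let s ⊆ ℤ be a finite set, let h : ℤ → ℝ, and let φ : ℝ → ℝ be a bounded measurable function satisfying the refinement equation φ(x) = 2·∑_{n ∈ s} h_n·φ(2x − n) for all x ∈ ℝ. Define the heat evolution (H_t φ)(x) = ∫_ℝ φ(y)·(4πct)^(−1/2)·exp(−(x−y)²/(4ct)) dy for t > 0. Then for every t > 0 and x ∈ ℝ, (H_t φ)(x) = 2·∑_{n ∈ s} h_n·(H_{4t} φ)(2x − n). -/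
open MeasureTheory Real

set_option maxHeartbeats 1000000

/-- The heat evolution `(H_t g)(x) = ∫ g(y)·(4πct)^(−1/2)·exp(−(x−y)²/(4ct)) dy`. -/
noncomputable def heatEvol (c t : ℝ) (g : ℝ → ℝ) (x : ℝ) : ℝ :=
  ∫ y : ℝ, g y * ((4 * π * c * t) ^ (-(1 : ℝ) / 2)
    * Real.exp (-(x - y) ^ 2 / (4 * c * t)))

lemma four_rpow_neg_half : (4 : ℝ) ^ (-(1 : ℝ) / 2) = 1 / 2 := by
  rw [show (4 : ℝ) = (2 : ℝ) ^ (2 : ℕ) by norm_num, ← Real.rpow_natCast 2 2,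
    ← Real.rpow_mul (by norm_num)]
  norm_num [Real.rpow_neg_one]

lemma gauss_integrable {c t : ℝ} (hc : 0 < c) (ht : 0 < t) (a : ℝ) :
    Integrable (fun y : ℝ => (4 * π * c * t) ^ (-(1 : ℝ) / 2)
      * Real.exp (-(a - y) ^ 2 / (4 * c * t))) := by
  have hb : (0 : ℝ) < 1 / (4 * c * t) := by positivity
  have h1 : Integrable (fun y : ℝ => Real.exp (-(1 / (4 * c * t)) * (y - a) ^ 2)) :=
    (integrable_exp_neg_mul_sq hb).comp_sub_right a
  have h2 := h1.const_mul ((4 * π * c * t) ^ (-(1 : ℝ) / 2))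
  have key : ∀ y : ℝ, -(1 / (4 * c * t)) * (y - a) ^ 2 = -(a - y) ^ 2 / (4 * c * t) := by
    intro y
    field_simp
    ring
  refine h2.congr (Filter.Eventually.of_forall fun y => ?_)
  simp only [key y]

/-- Refinement property of diffusionlets (heat case): if the father wavelet
satisfies the refinement equation `φ(x) = 2·∑_{n ∈ s} h_n·φ(2x − n)`, then its
heat evolution satisfies `(H_t φ)(x) = 2·∑_{n ∈ s} h_n·(H_{4t} φ)(2x − n)`. -/
theorem heatlet_refinement
    (c : ℝ) (hc : 0 < c) (s : Finset ℤ) (h : ℤ → ℝ)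
    (φ : ℝ → ℝ) (hφ : Measurable φ) (hφb : ∃ C, ∀ x, |φ x| ≤ C)
    (hrefine : ∀ x : ℝ, φ x = 2 * ∑ n ∈ s, h n * φ (2 * x - n)) :
    ∀ t : ℝ, 0 < t → ∀ x : ℝ,
      heatEvol c t φ x = 2 * ∑ n ∈ s, h n * heatEvol c (4 * t) φ (2 * x - n) := by
  intro t ht x
  obtain ⟨C, hC⟩ := hφb
  have h4t : (0 : ℝ) < 4 * t := by linarith
  -- abbreviations
  set Kt : ℝ → ℝ := fun z => (4 * π * c * t) ^ (-(1 : ℝ) / 2)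
    * Real.exp (-z ^ 2 / (4 * c * t)) with hKt
  -- integrability of each summand
  have hint : ∀ n : ℤ, Integrable (fun y : ℝ =>
      (h n * 2) * (φ (2 * y - n) * Kt (x - y))) := by
    intro n
    have hmeas : AEStronglyMeasurable (fun y : ℝ => φ (2 * y - (n : ℝ))) volume := by
      exact (hφ.comp (by fun_prop)).aestronglyMeasurable
    have hb : Integrable (fun y : ℝ => φ (2 * y - n) * Kt (x - y)) := by
      refine Integrable.bdd_mul ?_ hmeas (c := C) (Filter.Eventually.of_forall fun y => by
        simpa [Real.norm_eq_abs] using hC (2 * y - n))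
      exact gauss_integrable hc ht x
    exact hb.const_mul _
  -- pointwise refinement of the integrand
  have hpt : ∀ y : ℝ, φ y * Kt (x - y)
      = ∑ n ∈ s, (h n * 2) * (φ (2 * y - n) * Kt (x - y)) := by
    intro y
    rw [hrefine y, mul_assoc, Finset.sum_mul, Finset.mul_sum]
    exact Finset.sum_congr rfl fun n _ => by ring
  -- change of variables per term
  have hterm : ∀ n : ℤ, (∫ y : ℝ, φ (2 * y - n) * Kt (x - y))
      = heatEvol c (4 * t) φ (2 * x - n) := by
    intro n
    set F : ℝ → ℝ := fun u => φ u * ((4 * π * c * (4 * t)) ^ (-(1 : ℝ) / 2)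
      * Real.exp (-(2 * x - n - u) ^ 2 / (4 * c * (4 * t)))) with hF
    have hcoef : (4 * π * c * (4 * t)) ^ (-(1 : ℝ) / 2)
        = (1 / 2) * (4 * π * c * t) ^ (-(1 : ℝ) / 2) := by
      rw [show 4 * π * c * (4 * t) = 4 * (4 * π * c * t) by ring,
        Real.mul_rpow (by norm_num) (by positivity), four_rpow_neg_half]
    have hptF : ∀ y : ℝ, φ (2 * y - n) * Kt (x - y) = 2 * F (2 * y - n) := by
      intro y
      rw [hF]
      simp only [hKt]
      rw [hcoef]
      have hexp : Real.exp (-(2 * x - ↑n - (2 * y - ↑n)) ^ 2 / (4 * c * (4 * t)))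
          = Real.exp (-(x - y) ^ 2 / (4 * c * t)) := by
        congr 1
        rw [div_eq_div_iff (by positivity) (by positivity)]
        ring
      rw [hexp]
      ring
    calc (∫ y : ℝ, φ (2 * y - n) * Kt (x - y))
        = ∫ y : ℝ, 2 * F (2 * y - n) := by
          exact integral_congr_ae (Filter.Eventually.of_forall hptF)
      _ = 2 * ∫ y : ℝ, F (2 * y - n) := by rw [integral_const_mul]
      _ = 2 * ∫ y : ℝ, (fun z => F (z - n)) (2 * y) := by norm_num
      _ = 2 * (|(2 : ℝ)⁻¹| • ∫ z : ℝ, F (z - n)) := by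
          rw [Measure.integral_comp_mul_left (fun z => F (z - n)) 2]
      _ = ∫ z : ℝ, F (z - n) := by
          rw [abs_of_pos (by norm_num : (0:ℝ) < (2:ℝ)⁻¹), smul_eq_mul]
          ring
      _ = ∫ u : ℝ, F u := integral_sub_right_eq_self F (n : ℝ)
      _ = heatEvol c (4 * t) φ (2 * x - n) := rfl
  -- put everything together
  calc heatEvol c t φ x
      = ∫ y : ℝ, ∑ n ∈ s, (h n * 2) * (φ (2 * y - n) * Kt (x - y)) := by
        exact integral_congr_ae (Filter.Eventually.of_forall hpt)
    _ = ∑ n ∈ s, ∫ y : ℝ, (h n * 2) * (φ (2 * y - n) * Kt (x - y)) :=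
        integral_finset_sum s fun n _ => hint n
    _ = ∑ n ∈ s, (h n * 2) * heatEvol c (4 * t) φ (2 * x - n) := by
        refine Finset.sum_congr rfl fun n _ => ?_
        rw [integral_const_mul, hterm n]
    _ = 2 * ∑ n ∈ s, h n * heatEvol c (4 * t) φ (2 * x - n) := by
        rw [Finset.mul_sum]
        exact Finset.sum_congr rfl fun n _ => by ring
end
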